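/- arXiv:1308.4450 — 7 statements merged into one kernel-verified Lean document; each statement's English description precedes it below -/
import Mathlib

section
/- Let Q be symmetric, f ∈ ℝⁿ, r > 0. If there exist x̄ ∈ ℝⁿ and μ̄ ∈ ℝ satisfying (Q + μ̄I)x̄ = f, ‖x̄‖ ≤ r, Q + μ̄I positive semidefinite, μ̄ ≥ 0, and μ̄(‖x̄‖ − r) = 0, then x̄ is a global minimizer of P(x) = xᵀQx − 2fᵀx over {x : ‖x‖ ≤ r}. -/
open Matrix

/-- KKT sufficiency: if (Q + μI)xb = f, ‖xb‖ ≤ r, Q + μI ⪰ 0, μ ≥ 0 and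
μ(‖xb‖ − r) = 0, then xb globally minimizes P(x) = xᵀQx − 2fᵀx over the ball. -/
theorem stmt_1 {n : ℕ} (Q : Matrix (Fin n) (Fin n) ℝ) (f : Fin n → ℝ) (r : ℝ)
    (hQsym : Q.IsSymm) (hr : 0 < r) (xb : Fin n → ℝ) (mub : ℝ)
    (hkkt1 : (Q + mub • (1 : Matrix (Fin n) (Fin n) ℝ)).mulVec xb = f)
    (hkkt2 : Real.sqrt (xb ⬝ᵥ xb) ≤ r)
    (hkkt3 : (Q + mub • (1 : Matrix (Fin n) (Fin n) ℝ)).PosSemidef)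
    (hkkt3' : 0 ≤ mub)
    (hkkt4 : mub * (Real.sqrt (xb ⬝ᵥ xb) - r) = 0) :
    ∀ x : Fin n → ℝ, Real.sqrt (x ⬝ᵥ x) ≤ r →
      (xb ⬝ᵥ Q.mulVec xb - 2 * (f ⬝ᵥ xb)) ≤ (x ⬝ᵥ Q.mulVec x - 2 * (f ⬝ᵥ x)) := by
  intro x hx
  set A : Matrix (Fin n) (Fin n) ℝ := Q + mub • (1 : Matrix (Fin n) (Fin n) ℝ) with hA
  have hself : ∀ y : Fin n → ℝ, (0:ℝ) ≤ y ⬝ᵥ y := fun y =>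
    Finset.sum_nonneg fun i _ => mul_self_nonneg (y i)
  have hxbxb : (0:ℝ) ≤ xb ⬝ᵥ xb := hself xb
  have hxx : (0:ℝ) ≤ x ⬝ᵥ x := hself x
  -- from hkkt4: mub * (xb⬝xb) = mub * r^2
  have h3 : mub * (xb ⬝ᵥ xb) = mub * r ^ 2 := by
    rcases mul_eq_zero.mp hkkt4 with h | h
    · simp [h]
    · have hs : Real.sqrt (xb ⬝ᵥ xb) = r := by linarith
      have : xb ⬝ᵥ xb = r ^ 2 := by
        rw [← hs]; rw [Real.sq_sqrt hxbxb]
      rw [this]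
  have h4 : x ⬝ᵥ x ≤ r ^ 2 := by
    have := Real.sqrt_le_sqrt (le_of_eq (Real.sq_sqrt hxx).symm)
    nlinarith [Real.sq_sqrt hxx, Real.sqrt_nonneg (x ⬝ᵥ x)]
  -- symmetry of A
  have hAsym : A.IsSymm := by
    simp [hA, Matrix.IsSymm, Matrix.transpose_add, Matrix.transpose_smul, hQsym.eq]
  have hsymdot : x ⬝ᵥ A.mulVec xb = xb ⬝ᵥ A.mulVec x := by
    calc x ⬝ᵥ A.mulVec xb = A.vecMul x ⬝ᵥ xb := dotProduct_mulVec x A xb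
    _ = Aᵀ.mulVec x ⬝ᵥ xb := by rw [← mulVec_transpose]
    _ = A.mulVec x ⬝ᵥ xb := by rw [hAsym.eq]
    _ = xb ⬝ᵥ A.mulVec x := dotProduct_comm _ _
  -- PSD inequality at x - xb
  have hpsd := hkkt3.dotProduct_mulVec_nonneg (x - xb)
  simp only [star_trivial] at hpsd
  have hexp : (0:ℝ) ≤ x ⬝ᵥ A.mulVec x - 2 * (x ⬝ᵥ A.mulVec xb) + xb ⬝ᵥ A.mulVec xb := by
    have : (x - xb) ⬝ᵥ A.mulVec (x - xb)
        = x ⬝ᵥ A.mulVec x - x ⬝ᵥ A.mulVec xb - xb ⬝ᵥ A.mulVec x + xb ⬝ᵥ A.mulVec xb := by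
      simp only [mulVec_sub, dotProduct_sub, sub_dotProduct]
      ring
    rw [this, ← hsymdot] at hpsd
    linarith
  have hAx : ∀ y : Fin n → ℝ, y ⬝ᵥ A.mulVec y = y ⬝ᵥ Q.mulVec y + mub * (y ⬝ᵥ y) := by
    intro y
    simp [hA, add_mulVec, smul_mulVec, one_mulVec, dotProduct_add,
      dotProduct_smul, smul_eq_mul]
  have h1 : x ⬝ᵥ A.mulVec xb = f ⬝ᵥ x := by
    rw [hkkt1, dotProduct_comm]
  have h2 : xb ⬝ᵥ A.mulVec xb = f ⬝ᵥ xb := by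
    rw [hkkt1, dotProduct_comm]
  have h2' := hAx xb
  have h1' := hAx x
  rw [h1, hAx x] at hexp
  rw [h2, ] at h2'
  nlinarith [mul_le_mul_of_nonneg_left h4 hkkt3']
end

section
/- Let Q be symmetric and σ̄ > 0 be such that G = Q + σ̄I is positive definite and ‖G⁻¹f‖ = r. Then x̄ = G⁻¹f is a global minimizer of P(x) = xᵀQx − 2fᵀx over the ball {x : ‖x‖ ≤ r}, and P(x̄) = −fᵀG⁻¹f − r²σ̄. -/
open Matrix

/-- Complementary-dual principle: if sb > 0, G = Q + sb·I is positive definite and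
‖G⁻¹f‖ = r, then xb = G⁻¹f globally minimizes P over the ball and
P(xb) = −fᵀG⁻¹f − r²·sb. -/
theorem stmt_3 {n : ℕ} (Q : Matrix (Fin n) (Fin n) ℝ) (f : Fin n → ℝ) (r : ℝ)
    (hQsym : Q.IsSymm) (hr : 0 < r) (sb : ℝ) (hsb : 0 < sb)
    (hpd : (Q + sb • (1 : Matrix (Fin n) (Fin n) ℝ)).PosDef)
    (hbd : Real.sqrt (((Q + sb • (1 : Matrix (Fin n) (Fin n) ℝ))⁻¹.mulVec f) ⬝ᵥ
      ((Q + sb • (1 : Matrix (Fin n) (Fin n) ℝ))⁻¹.mulVec f)) = r) :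
    (∀ x : Fin n → ℝ, Real.sqrt (x ⬝ᵥ x) ≤ r →
      (((Q + sb • (1 : Matrix (Fin n) (Fin n) ℝ))⁻¹.mulVec f) ⬝ᵥ
          Q.mulVec ((Q + sb • (1 : Matrix (Fin n) (Fin n) ℝ))⁻¹.mulVec f)
        - 2 * (f ⬝ᵥ ((Q + sb • (1 : Matrix (Fin n) (Fin n) ℝ))⁻¹.mulVec f)))
        ≤ (x ⬝ᵥ Q.mulVec x - 2 * (f ⬝ᵥ x))) ∧
    (((Q + sb • (1 : Matrix (Fin n) (Fin n) ℝ))⁻¹.mulVec f) ⬝ᵥ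
        Q.mulVec ((Q + sb • (1 : Matrix (Fin n) (Fin n) ℝ))⁻¹.mulVec f)
      - 2 * (f ⬝ᵥ ((Q + sb • (1 : Matrix (Fin n) (Fin n) ℝ))⁻¹.mulVec f)))
      = -(f ⬝ᵥ ((Q + sb • (1 : Matrix (Fin n) (Fin n) ℝ))⁻¹.mulVec f)) - r^2 * sb := by
  set G := Q + sb • (1 : Matrix (Fin n) (Fin n) ℝ) with hG
  set xb := G⁻¹.mulVec f with hxb
  have hGsym : G.IsSymm := by
    simp [hG, Matrix.IsSymm, Matrix.transpose_add, Matrix.transpose_smul, hQsym.eq]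
  have symm : ∀ x y : Fin n → ℝ, x ⬝ᵥ G.mulVec y = y ⬝ᵥ G.mulVec x := fun x y => by
    rw [Matrix.dotProduct_mulVec, ← Matrix.mulVec_transpose, hGsym, dotProduct_comm]
  have hGf : G.mulVec xb = f := by
    rw [hxb, Matrix.mulVec_mulVec, Matrix.mul_nonsing_inv _
      (isUnit_iff_ne_zero.mpr hpd.det_pos.ne'), Matrix.one_mulVec]
  have hGQ : ∀ x : Fin n → ℝ, G.mulVec x = Q.mulVec x + sb • x := fun x => by
    rw [hG, Matrix.add_mulVec, Matrix.smul_mulVec, Matrix.one_mulVec]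
  have hxx : xb ⬝ᵥ xb = r ^ 2 := by
    rw [← hbd]
    exact (Real.sq_sqrt (Finset.sum_nonneg fun i _ => mul_self_nonneg (xb i))).symm
  have hQxb : xb ⬝ᵥ Q.mulVec xb = f ⬝ᵥ xb - sb * r ^ 2 := by
    have h1 : xb ⬝ᵥ G.mulVec xb = xb ⬝ᵥ Q.mulVec xb + sb * (xb ⬝ᵥ xb) := by
      rw [hGQ, dotProduct_add, dotProduct_smul, smul_eq_mul]
    have h2 : xb ⬝ᵥ G.mulVec xb = f ⬝ᵥ xb := by
      rw [hGf, dotProduct_comm]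
    rw [hxx] at h1; linarith
  constructor
  · intro x hx
    have hxr : x ⬝ᵥ x ≤ r ^ 2 := by
      have h0 : 0 ≤ x ⬝ᵥ x := Finset.sum_nonneg fun i _ => mul_self_nonneg (x i)
      calc x ⬝ᵥ x = Real.sqrt (x ⬝ᵥ x) ^ 2 := (Real.sq_sqrt h0).symm
        _ ≤ r ^ 2 := pow_le_pow_left₀ (Real.sqrt_nonneg _) hx 2
    have hkey : 0 ≤ (x - xb) ⬝ᵥ G.mulVec (x - xb) := by
      simpa using hpd.posSemidef.dotProduct_mulVec_nonneg (x - xb)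
    have hexp : (x - xb) ⬝ᵥ G.mulVec (x - xb)
        = x ⬝ᵥ G.mulVec x - 2 * (xb ⬝ᵥ G.mulVec x) + xb ⬝ᵥ G.mulVec xb := by
      rw [Matrix.mulVec_sub, dotProduct_sub, sub_dotProduct,
        sub_dotProduct, symm x xb]
      ring
    have hQx : x ⬝ᵥ Q.mulVec x = x ⬝ᵥ G.mulVec x - sb * (x ⬝ᵥ x) := by
      rw [hGQ, dotProduct_add, dotProduct_smul, smul_eq_mul]; ring
    have hfx : f ⬝ᵥ x = xb ⬝ᵥ G.mulVec x := by
      rw [← hGf, dotProduct_comm, symm x xb]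
    have hfxb : f ⬝ᵥ xb = xb ⬝ᵥ G.mulVec xb := by
      rw [← hGf, dotProduct_comm]
    rw [hQxb, hQx, hfx, hfxb]
    nlinarith [mul_le_mul_of_nonneg_left hxr hsb.le]
  · rw [hQxb]; ring
end

section
/- The function P^d(σ) = −fᵀ(Q+σI)⁻¹f − r²σ is strictly concave on the open interval (−λ₁, ∞), where λ₁ is the smallest eigenvalue of Q, provided f ≠ 0. -/
open Matrix

section Helpers

lemma aux_inv_strictConvex (a : ℝ) :
    StrictConvexOn ℝ (Set.Ioi (-a)) (fun x : ℝ => (a + x)⁻¹) := by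
  have h := strictConvexOn_zpow (m := -1) (by norm_num) (by norm_num)
  refine ⟨convex_Ioi _, ?_⟩
  intro x hx y hy hxy s t hs ht hst
  have hx' : (0:ℝ) < a + x := by have := Set.mem_Ioi.mp hx; linarith
  have hy' : (0:ℝ) < a + y := by have := Set.mem_Ioi.mp hy; linarith
  have h2 := h.2 (Set.mem_Ioi.mpr hx') (Set.mem_Ioi.mpr hy')
    (by intro hc; exact hxy (by linarith [hc])) hs ht hst
  simp only [smul_eq_mul, _root_.zpow_neg, zpow_one] at h2 ⊢
  have key : a + (s * x + t * y) = s * (a + x) + t * (a + y) := by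
    linear_combination (-a) * hst
  rw [key]
  exact h2

lemma aux_term_strictConcave {c : ℝ} (a : ℝ) (hc : c ≠ 0) :
    StrictConcaveOn ℝ (Set.Ioi (-a)) (fun x : ℝ => -(c^2 * (a + x)⁻¹)) := by
  have h := aux_inv_strictConvex a
  refine ⟨convex_Ioi _, ?_⟩
  intro x hx y hy hxy s t hs ht hst
  have h2 := h.2 hx hy hxy hs ht hst
  have hc2 : (0:ℝ) < c^2 := by positivity
  simp only [smul_eq_mul] at h2 ⊢
  nlinarith [mul_lt_mul_of_pos_left h2 hc2]

lemma aux_term_concave (c a : ℝ) :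
    ConcaveOn ℝ (Set.Ioi (-a)) (fun x : ℝ => -(c^2 * (a + x)⁻¹)) := by
  have h := (aux_inv_strictConvex a).convexOn
  refine ⟨convex_Ioi _, ?_⟩
  intro x hx y hy s t hs ht hst
  have h2 := h.2 hx hy hs ht hst
  have hc2 : (0:ℝ) ≤ c^2 := by positivity
  simp only [smul_eq_mul] at h2 ⊢
  nlinarith [mul_le_mul_of_nonneg_left h2 hc2]

lemma aux_sum_concave {ι : Type*} (t : Finset ι) (S : Set ℝ) (hS : Convex ℝ S)
    (g : ι → ℝ → ℝ) (h : ∀ i ∈ t, ConcaveOn ℝ S (g i)) :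
    ConcaveOn ℝ S (fun x => ∑ i ∈ t, g i x) := by
  classical
  induction t using Finset.induction_on with
  | empty => simpa using concaveOn_const 0 hS
  | insert a s hni ih =>
      simp only [Finset.sum_insert hni]
      exact (h a (Finset.mem_insert_self a s)).add
        (ih fun i hi => h i (Finset.mem_insert_of_mem hi))

lemma aux_linear_concave (r : ℝ) (S : Set ℝ) (hS : Convex ℝ S) :
    ConcaveOn ℝ S (fun x => -(r^2 * x)) := by
  refine ⟨hS, ?_⟩
  intro x _ y _ s t _ _ _
  simp only [smul_eq_mul]
  apply le_of_eq
  ring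

end Helpers

/-- For f ≠ 0, the dual function Pd(σ) = −fᵀ(Q+σI)⁻¹f − r²σ is strictly concave on
(−λ₁, ∞), where λ₁ is the smallest eigenvalue of Q. -/
theorem stmt_5 {n : ℕ} (Q : Matrix (Fin n) (Fin n) ℝ) (f : Fin n → ℝ) (r : ℝ)
    (hQsym : Q.IsSymm) (hr : 0 < r) (hf : f ≠ 0) (lam1 : ℝ)
    (hlam1_eig : ∃ v : Fin n → ℝ, v ≠ 0 ∧ Q.mulVec v = lam1 • v)
    (hlam1_min : ∀ (μ : ℝ) (v : Fin n → ℝ), v ≠ 0 → Q.mulVec v = μ • v → lam1 ≤ μ) :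
    StrictConcaveOn ℝ (Set.Ioi (-lam1))
      (fun σ : ℝ =>
        -(f ⬝ᵥ ((Q + σ • (1 : Matrix (Fin n) (Fin n) ℝ))⁻¹.mulVec f)) - r^2 * σ) := by
  classical
  have hQ : Q.IsHermitian := by
    rw [Matrix.IsHermitian, conjTranspose_eq_transpose_of_trivial]
    exact hQsym
  set U : Matrix (Fin n) (Fin n) ℝ := (hQ.eigenvectorUnitary : Matrix (Fin n) (Fin n) ℝ)
    with hUdef
  set d : Fin n → ℝ := hQ.eigenvalues with hd
  have hUU : star U * U = 1 := Matrix.mem_unitaryGroup_iff'.mp hQ.eigenvectorUnitary.2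
  have hU'U : U * star U = 1 := Matrix.mem_unitaryGroup_iff.mp hQ.eigenvectorUnitary.2
  have hspec : Q = U * diagonal d * star U := by
    have := hQ.spectral_theorem
    rw [Unitary.conjStarAlgAut_apply] at this
    exact this
  -- eigenvalues are at least lam1
  have hd_ge : ∀ i, lam1 ≤ d i := by
    intro i
    refine hlam1_min (d i) (hQ.eigenvectorBasis i) ?_ (hQ.mulVec_eigenvectorBasis i)
    intro h0
    have := hQ.eigenvectorBasis.orthonormal.ne_zero i
    apply this
    ext j
    exact congrFun h0 j
  set c : Fin n → ℝ := star U *ᵥ f with hcdef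
  have hcne : c ≠ 0 := by
    intro h0
    apply hf
    have : f = U *ᵥ c := by
      rw [hcdef, mulVec_mulVec, hU'U, one_mulVec]
    rw [this, h0, mulVec_zero]
  obtain ⟨i₀, hi₀⟩ := Function.ne_iff.mp hcne
  -- key dot product formula
  have hdot : ∀ σ ∈ Set.Ioi (-lam1),
      f ⬝ᵥ ((Q + σ • (1 : Matrix (Fin n) (Fin n) ℝ))⁻¹.mulVec f)
        = ∑ i, (c i)^2 * (d i + σ)⁻¹ := by
    intro σ hσ
    have hσ' : -lam1 < σ := hσ
    have hpos : ∀ i, 0 < d i + σ := fun i => by linarith [hd_ge i]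
    have hsum : Q + σ • (1 : Matrix (Fin n) (Fin n) ℝ)
        = U * diagonal (fun i => d i + σ) * star U := by
      have h1 : diagonal (fun i : Fin n => d i + σ) = diagonal d + σ • 1 := by
        ext i j
        by_cases h : i = j <;>
          simp [Matrix.diagonal_apply, Matrix.one_apply, h]
      rw [h1, mul_add, add_mul, ← hspec]
      congr 1
      rw [mul_smul_comm, mul_one, smul_mul_assoc, hU'U]
    have hinv : (Q + σ • (1 : Matrix (Fin n) (Fin n) ℝ))⁻¹
        = U * diagonal (fun i => (d i + σ)⁻¹) * star U := by
      apply Matrix.inv_eq_left_inv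
      rw [hsum]
      have hcancel : ∀ X : Matrix (Fin n) (Fin n) ℝ, star U * (U * X) = X := by
        intro X; rw [← mul_assoc, hUU, one_mul]
      simp only [Matrix.mul_assoc]
      rw [hcancel, ← Matrix.mul_assoc (diagonal _) (diagonal _), diagonal_mul_diagonal]
      have : (fun i => (d i + σ)⁻¹ * (d i + σ)) = fun _ => (1:ℝ) := by
        funext i; exact inv_mul_cancel₀ (hpos i).ne'
      rw [this, diagonal_one, one_mul, hU'U]
    rw [hinv, ← mulVec_mulVec, ← mulVec_mulVec, dotProduct_mulVec]
    have hc : Matrix.vecMul f U = c := by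
      rw [hcdef]
      ext i
      simp [Matrix.vecMul, Matrix.mulVec, dotProduct, Matrix.star_eq_conjTranspose,
        Matrix.conjTranspose_apply, mul_comm]
    rw [hc]
    simp only [Matrix.mulVec_diagonal, dotProduct]
    exact Finset.sum_congr rfl fun i _ => by ring
  -- the model function
  have hsubset : ∀ i : Fin n, Set.Ioi (-lam1) ⊆ Set.Ioi (-(d i)) := by
    intro i σ hσ
    have : -lam1 < σ := hσ
    have := hd_ge i
    simp only [Set.mem_Ioi]
    linarith
  have hmain : StrictConcaveOn ℝ (Set.Ioi (-lam1))
      (fun σ : ℝ => -((c i₀)^2 * (d i₀ + σ)⁻¹)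
        + ((∑ i ∈ Finset.univ.erase i₀, -((c i)^2 * (d i + σ)⁻¹)) + (-(r^2 * σ)))) := by
    refine StrictConcaveOn.add_concaveOn ?_ (ConcaveOn.add ?_ ?_)
    · exact (aux_term_strictConcave (d i₀) hi₀).subset (hsubset i₀) (convex_Ioi _)
    · exact aux_sum_concave _ _ (convex_Ioi _) _
        (fun i _ => (aux_term_concave (c i) (d i)).subset (hsubset i) (convex_Ioi _))
    · exact aux_linear_concave r _ (convex_Ioi _)
  refine hmain.congr ?_
  intro σ hσ
  simp only
  rw [hdot σ hσ]
  have h1 : (∑ i, c i ^ 2 * (d i + σ)⁻¹)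
      = c i₀ ^ 2 * (d i₀ + σ)⁻¹ + ∑ i ∈ Finset.univ.erase i₀, c i ^ 2 * (d i + σ)⁻¹ :=
    (Finset.add_sum_erase _ _ (Finset.mem_univ i₀)).symm
  rw [h1, Finset.sum_neg_distrib]
  ring
end

section
/- If Σ_{i=1}^k f̂ᵢ² ≠ 0, then the dual function P^d(σ) tends to −∞ as σ → (−λ₁)⁺ and as σ → +∞, and hence P^d attains its maximum over (−λ₁, ∞) at a unique critical point. -/
open Matrix

open Filter Set in
/-- If Σ_{i<k} fhᵢ² ≠ 0, then Pd tends to −∞ as σ → (−λ₁)⁺ and as σ → +∞, and Pd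
attains its maximum over (−λ₁, ∞) at a unique critical point. -/
theorem stmt_8 {n : ℕ} (lam fh : Fin n → ℝ) (r : ℝ) (k : ℕ) (lam1 : ℝ)
    (hr : 0 < r) (hk : 0 < k) (hkn : k ≤ n)
    (hlow : ∀ i : Fin n, (i : ℕ) < k → lam i = lam1)
    (hhigh : ∀ i : Fin n, k ≤ (i : ℕ) → lam1 < lam i)
    (hf0 : ∑ i ∈ Finset.univ.filter (fun i : Fin n => (i : ℕ) < k), (fh i)^2 ≠ 0)
    (Pd : ℝ → ℝ)
    (hPd : ∀ σ : ℝ, Pd σ =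
      -(∑ i ∈ Finset.univ.filter (fun i : Fin n => (i : ℕ) < k), (fh i)^2) / (lam1 + σ)
      - ∑ i ∈ Finset.univ.filter (fun i : Fin n => k ≤ (i : ℕ)),
          (fh i)^2 / (lam i + σ)
      - r^2 * σ) :
    Filter.Tendsto Pd (nhdsWithin (-lam1) (Set.Ioi (-lam1))) Filter.atBot ∧
    Filter.Tendsto Pd Filter.atTop Filter.atBot ∧
    ∃! σb : ℝ, σb ∈ Set.Ioi (-lam1) ∧ deriv Pd σb = 0 ∧
      IsMaxOn Pd (Set.Ioi (-lam1)) σb := by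
  classical
  set S : Finset (Fin n) := Finset.univ.filter (fun i : Fin n => (i : ℕ) < k) with hS
  set T : Finset (Fin n) := Finset.univ.filter (fun i : Fin n => k ≤ (i : ℕ)) with hT
  set A : ℝ := ∑ i ∈ S, (fh i)^2 with hA
  have hApos : 0 < A :=
    lt_of_le_of_ne (Finset.sum_nonneg fun i _ => sq_nonneg _) (Ne.symm hf0)
  have hTpos : ∀ i ∈ T, lam1 < lam i := by
    intro i hi
    exact hhigh i (by simpa [hT] using hi)
  have hPdfun : Pd = fun σ => -A / (lam1 + σ) - (∑ i ∈ T, (fh i)^2 / (lam i + σ)) - r^2 * σ :=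
    funext hPd
  -- positivity facts
  have hpos : ∀ σ ∈ Ioi (-lam1), 0 < lam1 + σ := fun σ hσ => by
    have : -lam1 < σ := hσ; linarith
  have hposT : ∀ i ∈ T, ∀ σ ∈ Ioi (-lam1), 0 < lam i + σ := fun i hi σ hσ => by
    have h1 := hTpos i hi
    have : -lam1 < σ := hσ
    linarith
  -- the derivative function
  set g : ℝ → ℝ :=
    fun σ => A / (lam1 + σ)^2 + (∑ i ∈ T, (fh i)^2 / (lam i + σ)^2) - r^2 with hg
  have hderiv : ∀ σ ∈ Ioi (-lam1), HasDerivAt Pd (g σ) σ := by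
    intro σ hσ
    have h1 : HasDerivAt (fun σ : ℝ => lam1 + σ) 1 σ := (hasDerivAt_id σ).const_add lam1
    have h1' := (h1.inv (ne_of_gt (hpos σ hσ))).const_mul (-A)
    have hsum : HasDerivAt (fun σ : ℝ => ∑ i ∈ T, (fh i)^2 / (lam i + σ))
        (∑ i ∈ T, -((fh i)^2 / (lam i + σ)^2)) σ := by
      apply HasDerivAt.fun_sum
      intro i hi
      have h2 : HasDerivAt (fun σ : ℝ => lam i + σ) 1 σ := (hasDerivAt_id σ).const_add (lam i)
      have h3 := (h2.inv (ne_of_gt (hposT i hi σ hσ))).const_mul ((fh i)^2)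
      have e1 : (fun σ : ℝ => (fh i)^2 / (lam i + σ)) =
          fun σ : ℝ => (fh i)^2 * (lam i + σ)⁻¹ := by
        funext τ; rw [div_eq_mul_inv]
      have e2 : (fh i)^2 * (-1 / (lam i + σ)^2) = -((fh i)^2 / (lam i + σ)^2) := by ring
      rw [e1, ← e2]
      exact h3
    have hlin : HasDerivAt (fun σ : ℝ => r^2 * σ) (r^2) σ := by
      simpa using (hasDerivAt_id σ).const_mul (r^2)
    have h4 := (h1'.sub hsum).sub hlin
    have e1 : (fun σ : ℝ => -A / (lam1 + σ) - (∑ i ∈ T, (fh i)^2 / (lam i + σ)) - r^2 * σ) =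
        fun σ : ℝ => -A * (lam1 + σ)⁻¹ - (∑ i ∈ T, (fh i)^2 / (lam i + σ)) - r^2 * σ := by
      funext τ; rw [div_eq_mul_inv]
    have e2 : g σ = -A * (-1 / (lam1 + σ)^2) - (∑ i ∈ T, -((fh i)^2 / (lam i + σ)^2)) - r^2 := by
      simp only [hg]
      rw [Finset.sum_neg_distrib]
      ring
    rw [hPdfun, e1, e2]
    exact h4
  -- g is strictly antitone
  have hganti : StrictAntiOn g (Ioi (-lam1)) := by
    intro x hx y hy hxy
    have hx' := hpos x hx
    have hy' := hpos y hy
    have h1 : A / (lam1 + y)^2 < A / (lam1 + x)^2 := by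
      apply div_lt_div_of_pos_left hApos (by positivity)
      nlinarith
    have h2 : ∑ i ∈ T, (fh i)^2 / (lam i + y)^2 ≤ ∑ i ∈ T, (fh i)^2 / (lam i + x)^2 := by
      apply Finset.sum_le_sum
      intro i hi
      have hix := hposT i hi x hx
      have hiy := hposT i hi y hy
      apply div_le_div_of_nonneg_left (sq_nonneg _) (by positivity)
      nlinarith
    simp only [hg]
    linarith
  -- continuity of g on the interval
  have hgc : ∀ σ ∈ Ioi (-lam1), ContinuousAt g σ := by
    intro σ hσ
    apply ContinuousAt.sub _ continuousAt_const
    apply ContinuousAt.add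
    · exact continuousAt_const.div (by fun_prop) (ne_of_gt (pow_pos (hpos σ hσ) 2))
    · apply tendsto_finset_sum
      intro i hi
      exact continuousAt_const.div (by fun_prop)
        (ne_of_gt (pow_pos (hposT i hi σ hσ) 2))
  -- a point where g is positive
  obtain ⟨a, ha, hga⟩ : ∃ a ∈ Ioi (-lam1), 0 < g a := by
    set ε : ℝ := min 1 (A / (2 * r^2)) with hε
    have hε0 : 0 < ε := lt_min one_pos (by positivity)
    refine ⟨-lam1 + ε, by simp [hε0], ?_⟩
    have h1 : lam1 + (-lam1 + ε) = ε := by ring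
    have hsum : 0 ≤ ∑ i ∈ T, (fh i)^2 / (lam i + (-lam1 + ε))^2 :=
      Finset.sum_nonneg fun i hi => by positivity
    have hε1 : ε ≤ 1 := min_le_left _ _
    have hε2 : ε ≤ A / (2 * r^2) := min_le_right _ _
    have key : r^2 < A / ε^2 := by
      rw [lt_div_iff₀ (by positivity)]
      have h2 : ε^2 ≤ ε := by nlinarith
      have h3 : ε * (2 * r^2) ≤ A := by
        rwa [le_div_iff₀ (by positivity : (0:ℝ) < 2 * r^2)] at hε2
      nlinarith
    simp only [hg, h1]
    linarith
  -- a point where g is negative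
  obtain ⟨b, hb, hgb⟩ : ∃ b ∈ Ioi (-lam1), g b < 0 := by
    set C : ℝ := ∑ i ∈ T, (fh i)^2 with hC
    have hC0 : 0 ≤ C := Finset.sum_nonneg fun i _ => sq_nonneg _
    set M : ℝ := max 1 ((A + C + 1) / r^2) with hM
    have hM1 : 1 ≤ M := le_max_left _ _
    have hM0 : 0 < M := lt_of_lt_of_le one_pos hM1
    refine ⟨-lam1 + M, by simp [hM0], ?_⟩
    have h1 : lam1 + (-lam1 + M) = M := by ring
    have hsum : ∑ i ∈ T, (fh i)^2 / (lam i + (-lam1 + M))^2 ≤ C / M^2 := by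
      rw [hC, Finset.sum_div]
      apply Finset.sum_le_sum
      intro i hi
      have h2 : M ≤ lam i + (-lam1 + M) := by
        have := hTpos i hi; linarith
      apply div_le_div_of_nonneg_left (sq_nonneg _) (by positivity)
      nlinarith
    have hM2 : (A + C + 1) / r^2 ≤ M := le_max_right _ _
    have key : A / M^2 + C / M^2 < r^2 := by
      rw [← add_div, div_lt_iff₀ (by positivity)]
      rw [div_le_iff₀ (by positivity)] at hM2
      nlinarith
    simp only [hg, h1]
    linarith
  -- combine to get a zero of g via IVT
  have hb2lt : g (max b (a + 1)) < 0 := by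
    rcases le_or_gt (max b (a+1)) b with h | h
    · have he : max b (a+1) = b := le_antisymm h (le_max_left _ _)
      rw [he]; exact hgb
    · exact lt_trans (hganti hb (lt_trans hb h) h) hgb
  set b2 : ℝ := max b (a + 1) with hb2
  have hab2 : a < b2 := lt_of_lt_of_le (by linarith) (le_max_right _ _)
  have hb2mem : b2 ∈ Ioi (-lam1) := lt_trans ha hab2
  have hIccsub : Icc a b2 ⊆ Ioi (-lam1) := fun x hx => lt_of_lt_of_le ha hx.1
  obtain ⟨σb, hσbmem, hgσb⟩ : ∃ σb ∈ Icc a b2, g σb = 0 := by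
    have hIVT := intermediate_value_Icc' (le_of_lt hab2)
      (fun x hx => (hgc x (hIccsub hx)).continuousWithinAt)
    have h0 : (0:ℝ) ∈ Icc (g b2) (g a) := ⟨le_of_lt hb2lt, le_of_lt hga⟩
    obtain ⟨σb, hm, he⟩ := hIVT h0
    exact ⟨σb, hm, he⟩
  have hσb : σb ∈ Ioi (-lam1) := hIccsub hσbmem
  -- sign of g around σb
  have hgpos : ∀ x ∈ Ioi (-lam1), x < σb → 0 < g x := fun x hx hxσ => by
    have hlt := hganti hx hσb hxσ; rw [hgσb] at hlt; exact hlt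
  have hgneg : ∀ x ∈ Ioi (-lam1), σb < x → g x < 0 := fun x hx hxσ => by
    have hlt := hganti hσb hx hxσ; rw [hgσb] at hlt; exact hlt
  -- continuity of Pd on Ioi
  have hPdc : ∀ x ∈ Ioi (-lam1), ContinuousAt Pd x := fun x hx =>
    (hderiv x hx).continuousAt
  -- derivative facts
  have hderiveq : ∀ x ∈ Ioi (-lam1), deriv Pd x = g x := fun x hx =>
    (hderiv x hx).deriv
  -- max at σb
  have hmax : IsMaxOn Pd (Ioi (-lam1)) σb := by
    intro x hx
    simp only [mem_setOf_eq]
    rcases lt_trichotomy x σb with h | h | h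
    · have hsub : Icc x σb ⊆ Ioi (-lam1) := fun y hy => lt_of_lt_of_le hx hy.1
      have hmono := strictMonoOn_of_deriv_pos (convex_Icc x σb)
        (fun y hy => (hPdc y (hsub hy)).continuousWithinAt)
        (fun y hy => by
          rw [interior_Icc] at hy
          rw [hderiveq y (hsub (Ioo_subset_Icc_self hy))]
          exact hgpos y (hsub (Ioo_subset_Icc_self hy)) hy.2)
      exact le_of_lt (hmono ⟨le_refl x, le_of_lt h⟩ ⟨le_of_lt h, le_refl σb⟩ h)
    · rw [h]
    · have hsub : Icc σb x ⊆ Ioi (-lam1) := fun y hy => lt_of_lt_of_le hσb hy.1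
      have hanti := strictAntiOn_of_deriv_neg (convex_Icc σb x)
        (fun y hy => (hPdc y (hsub hy)).continuousWithinAt)
        (fun y hy => by
          rw [interior_Icc] at hy
          rw [hderiveq y (hsub (Ioo_subset_Icc_self hy))]
          exact hgneg y (hsub (Ioo_subset_Icc_self hy)) hy.1)
      exact le_of_lt (hanti ⟨le_refl σb, le_of_lt h⟩ ⟨le_of_lt h, le_refl x⟩ h)
  refine ⟨?_, ?_, ?_⟩
  · -- tendsto atBot as σ → (-lam1)⁺
    have h1 : Tendsto (fun σ : ℝ => lam1 + σ) (nhdsWithin (-lam1) (Ioi (-lam1)))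
        (nhdsWithin 0 (Ioi 0)) := by
      apply tendsto_nhdsWithin_of_tendsto_nhds_of_eventually_within
      · have h1a : Tendsto (fun σ : ℝ => lam1 + σ) (nhds (-lam1)) (nhds (lam1 + -lam1)) :=
          (continuous_const.add continuous_id).tendsto _
        simp only [add_neg_cancel] at h1a
        exact h1a.mono_left nhdsWithin_le_nhds
      · filter_upwards [self_mem_nhdsWithin] with σ hσ
        exact mem_Ioi.mpr (by have : -lam1 < σ := hσ; linarith)
    have h2 : Tendsto (fun σ : ℝ => -A / (lam1 + σ)) (nhdsWithin (-lam1) (Ioi (-lam1)))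
        atBot := by
      have h2a := (tendsto_inv_nhdsGT_zero.comp h1).const_mul_atTop_of_neg
        (neg_lt_zero.mpr hApos)
      have e : (fun σ : ℝ => -A / (lam1 + σ)) = fun σ : ℝ => -A * (lam1 + σ)⁻¹ := by
        funext τ; rw [div_eq_mul_inv]
      rw [e]
      exact h2a
    have h3 : Tendsto (fun σ : ℝ => -(∑ i ∈ T, (fh i)^2 / (lam i + σ)) - r^2 * σ)
        (nhdsWithin (-lam1) (Ioi (-lam1)))
        (nhds (-(∑ i ∈ T, (fh i)^2 / (lam i + -lam1)) - r^2 * -lam1)) := by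
      apply Tendsto.mono_left _ nhdsWithin_le_nhds
      apply ContinuousAt.tendsto
      apply ContinuousAt.sub
      · apply ContinuousAt.neg
        apply tendsto_finset_sum
        intro i hi
        exact continuousAt_const.div (by fun_prop)
          (ne_of_gt (by have := hTpos i hi; linarith : (0:ℝ) < lam i + -lam1))
      · fun_prop
    have e : Pd = fun σ => -A / (lam1 + σ) +
        (-(∑ i ∈ T, (fh i)^2 / (lam i + σ)) - r^2 * σ) := by
      rw [hPdfun]; funext τ; ring
    rw [e]
    exact h2.atBot_add h3
  · -- tendsto atBot as σ → ∞
    have h1 : Tendsto (fun σ : ℝ => lam1 + σ) atTop atTop :=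
      tendsto_atTop_add_const_left _ lam1 tendsto_id
    have h2 : Tendsto (fun σ : ℝ => -A / (lam1 + σ)) atTop (nhds 0) := by
      have h2a := (tendsto_inv_atTop_zero.comp h1).const_mul (-A)
      have e : (fun σ : ℝ => -A / (lam1 + σ)) = fun σ : ℝ => -A * (lam1 + σ)⁻¹ := by
        funext τ; rw [div_eq_mul_inv]
      rw [e]
      simpa using h2a
    have h3 : Tendsto (fun σ : ℝ => -(∑ i ∈ T, (fh i)^2 / (lam i + σ))) atTop (nhds 0) := by
      have h3a : Tendsto (fun σ : ℝ => ∑ i ∈ T, (fh i)^2 / (lam i + σ)) atTop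
          (nhds (∑ i ∈ T, (0:ℝ))) := by
        apply tendsto_finset_sum
        intro i hi
        have hi1 : Tendsto (fun σ : ℝ => lam i + σ) atTop atTop :=
          tendsto_atTop_add_const_left _ (lam i) tendsto_id
        have hi2 := (tendsto_inv_atTop_zero.comp hi1).const_mul ((fh i)^2)
        have e : (fun σ : ℝ => (fh i)^2 / (lam i + σ)) =
            fun σ : ℝ => (fh i)^2 * (lam i + σ)⁻¹ := by
          funext τ; rw [div_eq_mul_inv]
        rw [e]
        simpa using hi2
      simp only [Finset.sum_const, smul_zero] at h3a
      simpa using h3a.neg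
    have h4 : Tendsto (fun σ : ℝ => -(r^2 * σ)) atTop atBot := by
      have := tendsto_id.const_mul_atTop_of_neg (neg_neg_of_pos (by positivity : (0:ℝ) < r^2))
      simpa [neg_mul] using this
    have e : Pd = fun σ => -(r^2 * σ) +
        (-A / (lam1 + σ) + -(∑ i ∈ T, (fh i)^2 / (lam i + σ))) := by
      rw [hPdfun]; funext τ; ring
    rw [e]
    exact h4.atBot_add (by simpa using h2.add h3)
  · -- unique critical point
    refine ⟨σb, ⟨hσb, by rw [hderiveq σb hσb]; exact hgσb, hmax⟩, ?_⟩
    rintro σ' ⟨hσ'mem, hσ'deriv, -⟩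
    have h1 : g σ' = 0 := by rw [← hderiveq σ' hσ'mem]; exact hσ'deriv
    exact hganti.injOn hσ'mem hσb (by rw [h1, hgσb])
end

section
/- If Σ_{i=1}^k f̂ᵢ² = 0 and Σ_{i=k+1}^n f̂ᵢ²/(λᵢ−λ₁)² > r², then the function ψ(σ) = Σ_{i=k+1}^n f̂ᵢ²/(λᵢ+σ)² − r² has a unique zero in (−λ₁, ∞). -/
open Matrix

/-- If Σ_{i<k} fhᵢ² = 0 and Σ_{i≥k} fhᵢ²/(λᵢ−λ₁)² > r², then
ψ(σ) = Σ_{i≥k} fhᵢ²/(λᵢ+σ)² − r² has a unique zero in (−λ₁, ∞). -/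
theorem stmt_9 {n : ℕ} (lam fh : Fin n → ℝ) (r : ℝ) (k : ℕ) (lam1 : ℝ)
    (hr : 0 < r) (hk : 0 < k) (hkn : k ≤ n)
    (hlow : ∀ i : Fin n, (i : ℕ) < k → lam i = lam1)
    (hhigh : ∀ i : Fin n, k ≤ (i : ℕ) → lam1 < lam i)
    (hf0 : ∑ i ∈ Finset.univ.filter (fun i : Fin n => (i : ℕ) < k), (fh i)^2 = 0)
    (hsum : r^2 < ∑ i ∈ Finset.univ.filter (fun i : Fin n => k ≤ (i : ℕ)),
      (fh i)^2 / (lam i - lam1)^2) :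
    ∃! σ : ℝ, σ ∈ Set.Ioi (-lam1) ∧
      (∑ i ∈ Finset.univ.filter (fun i : Fin n => k ≤ (i : ℕ)),
        (fh i)^2 / (lam i + σ)^2) - r^2 = 0 := by
  set S := Finset.univ.filter (fun i : Fin n => k ≤ (i : ℕ)) with hS
  set g : ℝ → ℝ := fun σ => ∑ i ∈ S, (fh i)^2 / (lam i + σ)^2 with hg
  have hmem : ∀ i ∈ S, k ≤ (i : ℕ) := by
    intro i hi; simpa [hS] using hi
  have hpos : ∀ i ∈ S, ∀ σ ∈ Set.Ici (-lam1), 0 < lam i + σ := by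
    intro i hi σ hσ
    have := hhigh i (hmem i hi)
    have : lam1 < lam i := this
    have hσ' : -lam1 ≤ σ := hσ
    linarith
  -- there is an index with nonzero coefficient
  have hex : ∃ i ∈ S, fh i ≠ 0 := by
    by_contra h
    push_neg at h
    have : ∑ i ∈ S, (fh i)^2 / (lam i - lam1)^2 = 0 := by
      apply Finset.sum_eq_zero
      intro i hi
      rw [h i hi]; simp
    rw [this] at hsum
    nlinarith
  obtain ⟨i₀, hi₀S, hi₀⟩ := hex
  -- continuity on Ici (-lam1)
  have hcont : ContinuousOn g (Set.Ici (-lam1)) := by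
    apply continuousOn_finset_sum
    intro i hi
    apply ContinuousOn.div continuousOn_const (by fun_prop)
    intro σ hσ
    exact pow_ne_zero 2 (ne_of_gt (hpos i hi σ hσ))
  -- strict antitonicity on Ici (-lam1)
  have hanti : StrictAntiOn g (Set.Ici (-lam1)) := by
    intro σ1 hσ1 σ2 hσ2 h12
    apply Finset.sum_lt_sum
    · intro i hi
      have h1 := hpos i hi σ1 hσ1
      have h2 := hpos i hi σ2 hσ2
      apply div_le_div_of_nonneg_left (sq_nonneg _) (by positivity)
      nlinarith
    · refine ⟨i₀, hi₀S, ?_⟩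
      have h1 := hpos i₀ hi₀S σ1 hσ1
      have h2 := hpos i₀ hi₀S σ2 hσ2
      apply div_lt_div_of_pos_left (by positivity) (by positivity)
      nlinarith
  -- value at -lam1
  have hA : r^2 < g (-lam1) := by
    have : g (-lam1) = ∑ i ∈ S, (fh i)^2 / (lam i - lam1)^2 := by
      apply Finset.sum_congr rfl
      intro i hi; ring_nf
    rw [this]; exact hsum
  -- large value B with g B < r^2
  set C := ∑ i ∈ S, (fh i)^2 with hC
  have hC0 : 0 ≤ C := Finset.sum_nonneg fun i _ => sq_nonneg _
  set t : ℝ := Real.sqrt C / r + 1 with ht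
  have ht0 : 0 < t := by positivity
  have htC : C < t^2 * r^2 := by
    have hs : Real.sqrt C ^ 2 = C := Real.sq_sqrt hC0
    have hsr : 0 ≤ Real.sqrt C := Real.sqrt_nonneg _
    have htr : t * r = Real.sqrt C + r := by
      rw [ht]; field_simp
    nlinarith [htr, hs, hsr, hr]
  set B : ℝ := -lam1 + t with hB
  have hBmem : B ∈ Set.Ici (-lam1) := by simp [hB]; linarith
  have hgB : g B < r^2 := by
    have hle : g B ≤ C / t^2 := by
      have : C / t^2 = ∑ i ∈ S, fh i^2 / t^2 := by rw [hC, Finset.sum_div]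
      rw [this]
      apply Finset.sum_le_sum
      intro i hi
      have h1 := hpos i hi B hBmem
      have h2 : t ≤ lam i + B := by
        have := hhigh i (hmem i hi)
        simp only [hB]; linarith
      apply div_le_div_of_nonneg_left (sq_nonneg _) (by positivity)
      nlinarith
    calc g B ≤ C / t^2 := hle
      _ < r^2 := by rw [div_lt_iff₀ (by positivity)]; nlinarith
  -- IVT
  have hAB : -lam1 ≤ B := hBmem
  have hivt := intermediate_value_Icc' hAB (hcont.mono (Set.Icc_subset_Ici_self))
  have hr2 : r^2 ∈ Set.Icc (g B) (g (-lam1)) := ⟨le_of_lt hgB, le_of_lt hA⟩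
  obtain ⟨σ, hσmem, hσval⟩ := hivt hr2
  have hσIoi : σ ∈ Set.Ioi (-lam1) := by
    rcases eq_or_lt_of_le hσmem.1 with h | h
    · exfalso; rw [← h] at hσval; rw [hσval] at hA; exact lt_irrefl _ hA
    · exact h
  refine ⟨σ, ⟨hσIoi, by show g σ - r^2 = 0; rw [hσval]; ring⟩, ?_⟩
  intro y ⟨hy1, hy2⟩
  have hyval : g y = r^2 := by
    have : g y - r^2 = 0 := by simpa [hg, hS] using hy2
    linarith
  have hyIci : y ∈ Set.Ici (-lam1) := le_of_lt (show -lam1 < y from hy1)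
  have hσIci : σ ∈ Set.Ici (-lam1) := le_of_lt (show -lam1 < σ from hσIoi)
  exact hanti.injOn hyIci hσIci (by rw [hyval, hσval])
end

section
/- For f ≠ 0, the function ψ(σ) = fᵀ(Q+σI)⁻²f − r² is strictly decreasing and strictly convex on (−λ₁, ∞), where λ₁ is the smallest eigenvalue of Q. -/
open Matrix

/-- For f ≠ 0, ψ(σ) = fᵀ(Q+σI)⁻²f − r² is strictly decreasing and strictly convex on
(−λ₁, ∞), λ₁ the smallest eigenvalue of Q. -/
theorem stmt_10 {n : ℕ} (Q : Matrix (Fin n) (Fin n) ℝ) (f : Fin n → ℝ) (r : ℝ)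
    (hQsym : Q.IsSymm) (hr : 0 < r) (hf : f ≠ 0) (lam1 : ℝ)
    (hlam1_eig : ∃ v : Fin n → ℝ, v ≠ 0 ∧ Q.mulVec v = lam1 • v)
    (hlam1_min : ∀ (μ : ℝ) (v : Fin n → ℝ), v ≠ 0 → Q.mulVec v = μ • v → lam1 ≤ μ)
    (ψ : ℝ → ℝ)
    (hψ : ∀ σ : ℝ, ψ σ = f ⬝ᵥ (((Q + σ • (1 : Matrix (Fin n) (Fin n) ℝ))⁻¹ *
      (Q + σ • (1 : Matrix (Fin n) (Fin n) ℝ))⁻¹).mulVec f) - r^2) :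
    StrictAntiOn ψ (Set.Ioi (-lam1)) ∧ StrictConvexOn ℝ (Set.Ioi (-lam1)) ψ := by
  have hQ : Q.IsHermitian := by
    rw [Matrix.IsHermitian, conjTranspose_eq_transpose_of_trivial]; exact hQsym
  set U := (hQ.eigenvectorUnitary : Matrix (Fin n) (Fin n) ℝ) with hU
  set e := hQ.eigenvalues with he
  have hUU : U * star U = 1 := hQ.eigenvectorUnitary.2.2
  have hUU' : star U * U = 1 := hQ.eigenvectorUnitary.2.1
  set g : Fin n → ℝ := star U *ᵥ f with hg
  -- lower bound for eigenvalues
  have heig : ∀ i, lam1 ≤ e i := fun i =>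
    hlam1_min (e i) (hQ.eigenvectorBasis i)
      (by simpa using hQ.eigenvectorBasis.orthonormal.ne_zero i) (hQ.mulVec_eigenvectorBasis i)
  have hpos : ∀ σ ∈ Set.Ioi (-lam1), ∀ i, 0 < e i + σ := by
    intro σ hσ i
    have := heig i
    have : -lam1 < σ := hσ
    linarith [heig i]
  -- g ≠ 0
  have hgne : g ≠ 0 := by
    intro h0
    apply hf
    have : U *ᵥ g = f := by
      rw [hg, mulVec_mulVec, hUU, one_mulVec]
    rw [← this, h0, mulVec_zero]
  obtain ⟨i0, hi0⟩ : ∃ i, g i ≠ 0 := Function.ne_iff.mp hgne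
  -- the explicit formula
  set φ : ℝ → ℝ := fun σ => (∑ i, (g i)^2 * (e i + σ) ^ (-2 : ℤ)) - r^2 with hφdef
  have hkey : ∀ σ ∈ Set.Ioi (-lam1), ψ σ = φ σ := by
    intro σ hσ
    have hp := hpos σ hσ
    have hne : ∀ i, e i + σ ≠ 0 := fun i => (hp i).ne'
    set A := Q + σ • (1 : Matrix (Fin n) (Fin n) ℝ) with hA
    have hAeq : A = U * diagonal (fun i => e i + σ) * star U := by
      have h1 : σ • (1 : Matrix (Fin n) (Fin n) ℝ) = U * diagonal (fun _ => σ) * star U := by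
        rw [← smul_one_eq_diagonal, mul_smul_comm, smul_mul_assoc, mul_one, hUU]
      rw [hA]
      nth_rewrite 1 [hQ.spectral_theorem, h1]
      rw [Unitary.conjStarAlgAut_apply, ← hU, ← add_mul, ← mul_add, diagonal_add]
      congr 1
    have hAinv : A⁻¹ = U * diagonal (fun i => (e i + σ)⁻¹) * star U := by
      apply inv_eq_right_inv
      rw [hAeq]
      calc (U * diagonal (fun i => e i + σ) * star U) *
            (U * diagonal (fun i => (e i + σ)⁻¹) * star U)
          = U * (diagonal (fun i => e i + σ) * (star U * U) *
              diagonal (fun i => (e i + σ)⁻¹)) * star U := by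
            simp only [Matrix.mul_assoc]
        _ = 1 := by
            rw [hUU', mul_one, diagonal_mul_diagonal]
            have : (fun i => (e i + σ) * (e i + σ)⁻¹) = fun _ => (1:ℝ) := by
              funext i; exact mul_inv_cancel₀ (hne i)
            rw [this, diagonal_one, mul_one, hUU]
    have hA2 : A⁻¹ * A⁻¹ = U * diagonal (fun i => ((e i + σ)⁻¹ * (e i + σ)⁻¹)) * star U := by
      rw [hAinv]
      calc (U * diagonal (fun i => (e i + σ)⁻¹) * star U) *
            (U * diagonal (fun i => (e i + σ)⁻¹) * star U)
          = U * (diagonal (fun i => (e i + σ)⁻¹) * (star U * U) *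
              diagonal (fun i => (e i + σ)⁻¹)) * star U := by
            simp only [Matrix.mul_assoc]
        _ = _ := by rw [hUU', mul_one, diagonal_mul_diagonal]
    rw [hψ σ, ← hA, hA2, hφdef]
    congr 1
    have hstep : (U * diagonal (fun i => ((e i + σ)⁻¹ * (e i + σ)⁻¹)) * star U) *ᵥ f
        = U *ᵥ (diagonal (fun i => ((e i + σ)⁻¹ * (e i + σ)⁻¹)) *ᵥ g) := by
      rw [hg, mulVec_mulVec, mulVec_mulVec, Matrix.mul_assoc]
    rw [hstep, dotProduct_mulVec]
    have hvm : f ᵥ* U = g := by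
      rw [hg, ← mulVec_transpose, ← conjTranspose_eq_transpose_of_trivial]
      rfl
    rw [hvm]
    simp only [dotProduct, mulVec_diagonal]
    apply Finset.sum_congr rfl
    intro i _
    have : (e i + σ) ^ (-2 : ℤ) = (e i + σ)⁻¹ * (e i + σ)⁻¹ := by
      rw [show ((-2 : ℤ)) = -(2:ℤ) from rfl, _root_.zpow_neg, zpow_two, mul_inv]
    rw [this]; ring
  -- derivatives of φ
  set D1 : ℝ → ℝ := fun σ => ∑ i, (g i)^2 * ((-2 : ℝ) * (e i + σ) ^ (-3 : ℤ)) with hD1def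
  set D2 : ℝ → ℝ := fun σ => ∑ i, (g i)^2 * ((6 : ℝ) * (e i + σ) ^ (-4 : ℤ)) with hD2def
  have hderiv1 : ∀ σ ∈ Set.Ioi (-lam1), HasDerivAt φ (D1 σ) σ := by
    intro σ hσ
    have hp := hpos σ hσ
    have hsum : HasDerivAt (fun s => ∑ i, (g i)^2 * (e i + s) ^ (-2 : ℤ))
        (∑ i, (g i)^2 * ((-2 : ℝ) * (e i + σ) ^ (-3 : ℤ))) σ := by
      apply HasDerivAt.fun_sum
      intro i _
      have hin : HasDerivAt (fun s : ℝ => e i + s) 1 σ := (hasDerivAt_id σ).const_add (e i)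
      have hz : HasDerivAt (fun x : ℝ => x ^ (-2 : ℤ)) ((-2 : ℝ) * (e i + σ) ^ (-3 : ℤ))
          (e i + σ) := by
        have h := hasDerivAt_zpow (-2) (e i + σ) (Or.inl (hp i).ne')
        convert h using 1
        · rfl
        · norm_num
      have h2 := (hz.comp σ hin).const_mul ((g i)^2)
      have h3 : (g i)^2 * ((-2 : ℝ) * (e i + σ) ^ (-3 : ℤ) * 1)
          = (g i)^2 * ((-2 : ℝ) * (e i + σ) ^ (-3 : ℤ)) := by ring
      rw [h3] at h2
      exact h2
    exact hsum.sub_const (r^2)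
  have hderiv2 : ∀ σ ∈ Set.Ioi (-lam1), HasDerivAt D1 (D2 σ) σ := by
    intro σ hσ
    have hp := hpos σ hσ
    apply HasDerivAt.fun_sum
    intro i _
    have hin : HasDerivAt (fun s : ℝ => e i + s) 1 σ := (hasDerivAt_id σ).const_add (e i)
    have hz : HasDerivAt (fun x : ℝ => x ^ (-3 : ℤ)) ((-3 : ℝ) * (e i + σ) ^ (-4 : ℤ))
        (e i + σ) := by
      have h := hasDerivAt_zpow (-3) (e i + σ) (Or.inl (hp i).ne')
      convert h using 1
      · rfl
      · norm_num
    have h2 := ((hz.comp σ hin).const_mul (-2 : ℝ)).const_mul ((g i)^2)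
    have : (g i)^2 * ((-2 : ℝ) * ((-3 : ℝ) * (e i + σ) ^ (-4 : ℤ) * 1))
        = (g i)^2 * ((6 : ℝ) * (e i + σ) ^ (-4 : ℤ)) := by ring
    rw [this] at h2
    exact h2
  have hcont : ContinuousOn φ (Set.Ioi (-lam1)) := fun x hx =>
    ((hderiv1 x hx).differentiableAt.continuousAt).continuousWithinAt
  have hopen : IsOpen (Set.Ioi (-lam1)) := isOpen_Ioi
  have hderiv_eq : ∀ σ ∈ Set.Ioi (-lam1), deriv φ σ = D1 σ := fun σ hσ => (hderiv1 σ hσ).deriv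
  have hD1neg : ∀ σ ∈ Set.Ioi (-lam1), D1 σ < 0 := by
    intro σ hσ
    have hp := hpos σ hσ
    have : (0:ℝ) < ∑ i, (g i)^2 * ((2 : ℝ) * (e i + σ) ^ (-3 : ℤ)) := by
      apply Finset.sum_pos'
      · intro i _
        have := zpow_pos (hp i) (-3 : ℤ)
        positivity
      · refine ⟨i0, Finset.mem_univ i0, ?_⟩
        have h1 : (0:ℝ) < (g i0)^2 := by positivity
        have h2 := zpow_pos (hp i0) (-3 : ℤ)
        positivity
    have hD1σ : D1 σ = ∑ i, (g i)^2 * ((-2 : ℝ) * (e i + σ) ^ (-3 : ℤ)) := rfl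
    have heq : ∑ i, (g i)^2 * ((-2 : ℝ) * (e i + σ) ^ (-3 : ℤ))
        = -∑ i, (g i)^2 * ((2 : ℝ) * (e i + σ) ^ (-3 : ℤ)) := by
      rw [← Finset.sum_neg_distrib]
      apply Finset.sum_congr rfl
      intro i _; ring
    rw [hD1σ, heq]
    linarith
  have hD2pos : ∀ σ ∈ Set.Ioi (-lam1), 0 < D2 σ := by
    intro σ hσ
    have hp := hpos σ hσ
    apply Finset.sum_pos'
    · intro i _
      have := zpow_pos (hp i) (-4 : ℤ)
      positivity
    · refine ⟨i0, Finset.mem_univ i0, ?_⟩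
      have h1 : (0:ℝ) < (g i0)^2 := by positivity
      have h2 := zpow_pos (hp i0) (-4 : ℤ)
      positivity
  -- strict anti for φ
  have hanti : StrictAntiOn φ (Set.Ioi (-lam1)) := by
    apply strictAntiOn_of_deriv_neg (convex_Ioi _) hcont
    intro x hx
    rw [interior_Ioi] at hx
    rw [hderiv_eq x hx]
    exact hD1neg x hx
  have hconv : StrictConvexOn ℝ (Set.Ioi (-lam1)) φ := by
    apply strictConvexOn_of_deriv2_pos (convex_Ioi _) hcont
    intro x hx
    rw [interior_Ioi] at hx
    have hev : deriv φ =ᶠ[nhds x] D1 :=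
      Filter.eventuallyEq_of_mem (hopen.mem_nhds hx) hderiv_eq
    have : deriv (deriv φ) x = deriv D1 x := hev.deriv_eq
    rw [Function.iterate_succ, Function.iterate_one, Function.comp_apply, this,
      (hderiv2 x hx).deriv]
    exact hD2pos x hx
  constructor
  · intro a ha b hb hab
    rw [hkey a ha, hkey b hb]
    exact hanti ha hb hab
  · refine ⟨convex_Ioi _, ?_⟩
    intro x hx y hy hxy a b ha hb hab
    have hmem : a • x + b • y ∈ Set.Ioi (-lam1) := (convex_Ioi _) hx hy ha.le hb.le hab
    rw [hkey x hx, hkey y hy, hkey _ hmem]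
    exact hconv.2 hx hy hxy ha hb hab
end

section
/- Let h(y) = Σ_i μᵢ yᵢ² − 2Σ_i cᵢ yᵢ − 2β√(r² − ‖y‖²) on the open ball {y ∈ ℝ^m : ‖y‖ < r}, with all μᵢ > 0 and β > 0. Then h is strictly convex on the open ball, and any stationary point y* satisfies yᵢ* = cᵢ/(μᵢ + β(r² − ‖y*‖²)^{−1/2}) for each i; in particular |yᵢ*| < |cᵢ/μᵢ|. -/
open Matrix

/-- The reduced perturbed function
h(y) = Σ μᵢyᵢ² − 2Σ cᵢyᵢ − 2β√(r² − ‖y‖²) (μᵢ > 0, β > 0) is strictly convex on the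
open ball ‖y‖ < r, and any stationary point y* there satisfies
y*ᵢ = cᵢ/(μᵢ + β(r² − ‖y*‖²)^{−1/2}); in particular |y*ᵢ| < |cᵢ/μᵢ| when cᵢ ≠ 0. -/
theorem stmt_18 {m : ℕ} (μ c : Fin m → ℝ) (β r : ℝ) (hr : 0 < r) (hβ : 0 < β)
    (hμ : ∀ i, 0 < μ i)
    (h : (Fin m → ℝ) → ℝ)
    (hh : ∀ y : Fin m → ℝ, h y = ∑ i, μ i * (y i)^2 - 2 * ∑ i, c i * y i
      - 2 * β * Real.sqrt (r^2 - y ⬝ᵥ y)) :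
    StrictConvexOn ℝ {y : Fin m → ℝ | Real.sqrt (y ⬝ᵥ y) < r} h ∧
    ∀ y : Fin m → ℝ, Real.sqrt (y ⬝ᵥ y) < r → fderiv ℝ h y = 0 →
      ∀ i, y i = c i / (μ i + β / Real.sqrt (r^2 - y ⬝ᵥ y)) ∧
        (c i ≠ 0 → |y i| < |c i / μ i|) := by
  have hfun : h = fun y : Fin m → ℝ => ∑ i, μ i * (y i)^2 - 2 * ∑ i, c i * y i
      - 2 * β * Real.sqrt (r^2 - y ⬝ᵥ y) := funext hh
  set S : Set (Fin m → ℝ) := {y : Fin m → ℝ | Real.sqrt (y ⬝ᵥ y) < r} with hSdef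
  have hmem : ∀ y : Fin m → ℝ, y ∈ S ↔ y ⬝ᵥ y < r ^ 2 := by
    intro y
    simp only [hSdef, Set.mem_setOf_eq, Real.sqrt_lt' hr]
  -- convexity of the quadratic y ↦ y ⬝ᵥ y on the whole space
  have hq : ConvexOn ℝ Set.univ (fun y : Fin m → ℝ => y ⬝ᵥ y) := by
    refine ⟨convex_univ, ?_⟩
    intro x _ y _ a b ha hb hab
    simp only [smul_eq_mul, dotProduct, Pi.add_apply, Pi.smul_apply, smul_eq_mul]
    rw [Finset.mul_sum, Finset.mul_sum, ← Finset.sum_add_distrib]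
    refine Finset.sum_le_sum fun i _ => ?_
    nlinarith [sq_nonneg (x i - y i), mul_nonneg (mul_nonneg ha hb) (sq_nonneg (x i - y i))]
  have hScvx : Convex ℝ S := by
    have := hq.convex_lt (r ^ 2)
    have hset : {x ∈ Set.univ | (fun y : Fin m → ℝ => y ⬝ᵥ y) x < r ^ 2} = S := by
      ext z
      simp [hmem z]
    rwa [hset] at this
  -- strict convexity of the quadratic-plus-linear part
  have hsc : StrictConvexOn ℝ S
      (fun y : Fin m → ℝ => ∑ i, μ i * (y i)^2 - 2 * ∑ i, c i * y i) := by
    refine ⟨hScvx, ?_⟩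
    intro x hx y hy hxy a b ha hb hab
    obtain ⟨i0, hi0⟩ : ∃ i, x i ≠ y i := by
      by_contra hcon
      push_neg at hcon
      exact hxy (funext hcon)
    simp only [smul_eq_mul, Pi.add_apply, Pi.smul_apply, smul_eq_mul]
    have key : ∑ i, μ i * (a * x i + b * y i)^2
        < ∑ i, (a * (μ i * (x i)^2) + b * (μ i * (y i)^2)) := by
      have hb' : b = 1 - a := by linarith
      have iden : ∀ j, a * (μ j * (x j)^2) + b * (μ j * (y j)^2)
          - μ j * (a * x j + b * y j)^2 = μ j * (a * b) * (x j - y j)^2 := by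
        intro j; rw [hb']; ring
      refine Finset.sum_lt_sum (fun j _ => ?_) ⟨i0, Finset.mem_univ _, ?_⟩
      · nlinarith [iden j, mul_nonneg (mul_nonneg (hμ j).le (mul_nonneg ha.le hb.le))
          (sq_nonneg (x j - y j))]
      · have h1 : 0 < (x i0 - y i0) ^ 2 := by
          rcases (sub_ne_zero_of_ne hi0).lt_or_gt with hlt | hlt <;> nlinarith
        nlinarith [iden i0, mul_pos (mul_pos (hμ i0) (mul_pos ha hb)) h1]
    have lin : ∑ i, c i * (a * x i + b * y i)
        = a * ∑ i, c i * x i + b * ∑ i, c i * y i := by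
      rw [Finset.mul_sum, Finset.mul_sum, ← Finset.sum_add_distrib]
      exact Finset.sum_congr rfl fun i _ => by ring
    have rhs : a * (∑ i, μ i * (x i)^2) + b * (∑ i, μ i * (y i)^2)
        = ∑ i, (a * (μ i * (x i)^2) + b * (μ i * (y i)^2)) := by
      rw [Finset.mul_sum, Finset.mul_sum, ← Finset.sum_add_distrib]
    linarith [key, lin, rhs]
  -- concavity of y ↦ √(r² − y⬝ᵥy) on S
  have hconc : ConcaveOn ℝ S (fun y : Fin m → ℝ => Real.sqrt (r ^ 2 - y ⬝ᵥ y)) := by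
    refine ⟨hScvx, ?_⟩
    intro x hx y hy a b ha hb hab
    have hx' : x ⬝ᵥ x < r ^ 2 := (hmem x).1 hx
    have hy' : y ⬝ᵥ y < r ^ 2 := (hmem y).1 hy
    have hqs := hq.2 (Set.mem_univ x) (Set.mem_univ y) ha hb hab
    simp only [smul_eq_mul] at hqs ⊢
    have step1 : a * Real.sqrt (r ^ 2 - x ⬝ᵥ x) + b * Real.sqrt (r ^ 2 - y ⬝ᵥ y)
        ≤ Real.sqrt (a * (r ^ 2 - x ⬝ᵥ x) + b * (r ^ 2 - y ⬝ᵥ y)) := by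
      have := Real.strictConcaveOn_sqrt.concaveOn.2
        (Set.mem_Ici.2 (by linarith : (0:ℝ) ≤ r ^ 2 - x ⬝ᵥ x))
        (Set.mem_Ici.2 (by linarith : (0:ℝ) ≤ r ^ 2 - y ⬝ᵥ y)) ha hb hab
      simpa [smul_eq_mul] using this
    have step2 : a * (r ^ 2 - x ⬝ᵥ x) + b * (r ^ 2 - y ⬝ᵥ y)
        ≤ r ^ 2 - (a • x + b • y) ⬝ᵥ (a • x + b • y) := by
      have : a * r ^ 2 + b * r ^ 2 = r ^ 2 := by nlinarith
      nlinarith [hqs]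
    calc a * Real.sqrt (r ^ 2 - x ⬝ᵥ x) + b * Real.sqrt (r ^ 2 - y ⬝ᵥ y)
        ≤ Real.sqrt (a * (r ^ 2 - x ⬝ᵥ x) + b * (r ^ 2 - y ⬝ᵥ y)) := step1
      _ ≤ Real.sqrt (r ^ 2 - (a • x + b • y) ⬝ᵥ (a • x + b • y)) :=
          Real.sqrt_le_sqrt step2
  have hstrict : StrictConvexOn ℝ S h := by
    rw [hfun]
    have hcv : ConcaveOn ℝ S
        (fun y : Fin m → ℝ => 2 * β * Real.sqrt (r ^ 2 - y ⬝ᵥ y)) := by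
      have := hconc.smul (c := 2 * β) (by positivity)
      simpa [smul_eq_mul, mul_assoc] using this
    have hadd := hsc.add_convexOn hcv.neg
    have hfe : (fun y : Fin m → ℝ => ∑ i, μ i * (y i)^2 - 2 * ∑ i, c i * y i
        - 2 * β * Real.sqrt (r ^ 2 - y ⬝ᵥ y))
        = (fun y : Fin m → ℝ => ∑ i, μ i * (y i)^2 - 2 * ∑ i, c i * y i)
          + -(fun y : Fin m → ℝ => 2 * β * Real.sqrt (r ^ 2 - y ⬝ᵥ y)) := by
      funext z
      simp only [Pi.add_apply, Pi.neg_apply]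
      ring
    rw [hfe]
    exact hadd
  refine ⟨hstrict, ?_⟩
  -- the stationary point analysis
  intro y hy hf i
  have hy' : y ⬝ᵥ y < r ^ 2 := (hmem y).1 hy
  set s0 : ℝ := r ^ 2 - y ⬝ᵥ y with hs0def
  have hs0 : 0 < s0 := by simp [hs0def]; linarith
  set sq : ℝ := Real.sqrt s0 with hsqdef
  have hsq : 0 < sq := Real.sqrt_pos.2 hs0
  -- derivative pieces
  have hp : ∀ j, HasFDerivAt (fun z : Fin m → ℝ => z j)
      (ContinuousLinearMap.proj j : (Fin m → ℝ) →L[ℝ] ℝ) y :=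
    fun j => hasFDerivAt_apply j y
  have h1 : HasFDerivAt (fun z : Fin m → ℝ => ∑ j, μ j * (z j)^2)
      (∑ j, (μ j * (2 * y j ^ 1)) • (ContinuousLinearMap.proj j : (Fin m → ℝ) →L[ℝ] ℝ)) y := by
    refine HasFDerivAt.fun_sum fun j _ => ?_
    exact ((hasDerivAt_pow 2 (y j)).const_mul (μ j)).comp_hasFDerivAt (h₂ := fun t => μ j * t ^ 2) y (hp j)
  have h2 : HasFDerivAt (fun z : Fin m → ℝ => ∑ j, c j * z j)
      (∑ j, (c j * 1) • (ContinuousLinearMap.proj j : (Fin m → ℝ) →L[ℝ] ℝ)) y := by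
    refine HasFDerivAt.fun_sum fun j _ => ?_
    exact ((hasDerivAt_id (y j)).const_mul (c j)).comp_hasFDerivAt y (hp j)
  have hqd : HasFDerivAt (fun z : Fin m → ℝ => z ⬝ᵥ z)
      (∑ j, (2 * y j ^ 1) • (ContinuousLinearMap.proj j : (Fin m → ℝ) →L[ℝ] ℝ)) y := by
    have : (fun z : Fin m → ℝ => z ⬝ᵥ z) = fun z : Fin m → ℝ => ∑ j, (z j)^2 := by
      funext z
      simp [dotProduct, pow_two]
    rw [this]
    refine HasFDerivAt.fun_sum fun j _ => ?_
    exact (hasDerivAt_pow 2 (y j)).comp_hasFDerivAt y (hp j)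
  have hsder : HasFDerivAt (fun z : Fin m → ℝ => r ^ 2 - z ⬝ᵥ z)
      (0 - ∑ j, (2 * y j ^ 1) • (ContinuousLinearMap.proj j : (Fin m → ℝ) →L[ℝ] ℝ)) y :=
    (hasFDerivAt_const (r ^ 2) y).sub hqd
  have hsqrt : HasFDerivAt (fun z : Fin m → ℝ => Real.sqrt (r ^ 2 - z ⬝ᵥ z))
      ((1 / (2 * sq)) • (0 - ∑ j, (2 * y j ^ 1) •
        (ContinuousLinearMap.proj j : (Fin m → ℝ) →L[ℝ] ℝ))) y := by
    have hd : HasDerivAt Real.sqrt (1 / (2 * sq)) (r ^ 2 - y ⬝ᵥ y) := by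
      rw [hsqdef, hs0def]
      exact Real.hasDerivAt_sqrt (by rw [← hs0def]; exact hs0.ne')
    exact hd.comp_hasFDerivAt y hsder
  have hL : HasFDerivAt h
      ((∑ j, (μ j * (2 * y j ^ 1)) • (ContinuousLinearMap.proj j : (Fin m → ℝ) →L[ℝ] ℝ))
        - (2:ℝ) • (∑ j, (c j * 1) • (ContinuousLinearMap.proj j : (Fin m → ℝ) →L[ℝ] ℝ))
        - (2 * β) • ((1 / (2 * sq)) • (0 - ∑ j, (2 * y j ^ 1) •
            (ContinuousLinearMap.proj j : (Fin m → ℝ) →L[ℝ] ℝ)))) y := by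
    rw [hfun]
    exact (h1.sub (h2.const_mul 2)).sub (hsqrt.const_mul (2 * β))
  have hL0 := hL.fderiv.symm.trans hf
  have heq := DFunLike.congr_fun hL0 (Pi.single i (1:ℝ))
  simp only [ContinuousLinearMap.coe_sub', Pi.sub_apply, ContinuousLinearMap.coe_sum',
    Finset.sum_apply, ContinuousLinearMap.coe_smul', Pi.smul_apply,
    ContinuousLinearMap.proj_apply, smul_eq_mul, ContinuousLinearMap.zero_apply,
    ContinuousLinearMap.coe_zero, Pi.zero_apply, Pi.single_apply, mul_ite, mul_one, mul_zero,
    Finset.sum_ite_eq', Finset.mem_univ, if_true, pow_one] at heq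
  -- heq : μ i * (2 * y i) - 2 * (c i) - 2 * β * (1/(2*sq) * (0 - 2 * y i)) = 0
  have hden : 0 < μ i + β / sq := by
    have := div_pos hβ hsq
    linarith [hμ i]
  clear_value s0 sq
  have hyi : y i = c i / (μ i + β / sq) := by
    rw [eq_div_iff hden.ne']
    field_simp at heq ⊢
    linear_combination heq / 2
  refine ⟨hyi, ?_⟩
  intro hc
  rw [hyi, abs_div, abs_div, abs_of_pos hden, abs_of_pos (hμ i)]
  have habs : 0 < |c i| := abs_pos.2 hc
  exact div_lt_div_of_pos_left habs (hμ i) (by nlinarith [div_pos hβ hsq])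
end
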